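/- There exists a constant C > 0, depending only on Δ, such that for every horizon T ≥ 2 there is a pure Alice strategy S_A with the following property: for every trajectory (a_t, b_t)_{t=1}^T consistent with S_A in which Bob is myopic — i.e. b_t = L implies V_B(a_t) ≥ 1 − V_B(a_t), and b_t = R implies 1 − V_B(a_t) ≥ V_B(a_t), for every t — Alice's Stackelberg regret satisfies Σ_{t=1}^T (u_A^* − u_A^t) ≤ C·(1 + log T). -/

import Mathlib

open MeasureTheory

/-- Bob's choice of the left or right piece. -/
inductive Choice
  | L
  | R
deriving DecidableEq

instance : Fintype Choice :=
  ⟨{Choice.L, Choice.R}, fun x => by cases x <;> simp⟩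

/-- The cumulative valuation `V(x) = ∫_0^x v`. -/
noncomputable def cumul (v : ℝ → ℝ) (x : ℝ) : ℝ := ∫ y in (0:ℝ)..x, v y

/-- `v` is an integrable value density on `[0,1]`, bounded between `lo` and `hi`,
integrating to `1`. -/
def IsDensity (lo hi : ℝ) (v : ℝ → ℝ) : Prop :=
  IntervalIntegrable v volume 0 1 ∧
  (∀ x ∈ Set.Icc (0:ℝ) 1, lo ≤ v x ∧ v x ≤ hi) ∧
  (∫ y in (0:ℝ)..1, v y) = 1

/-- Alice's round-`t` utility: if Bob picks `L` she gets `[a_t,1]`, else `[0,a_t]`. -/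
noncomputable def uA (vA : ℝ → ℝ) (a : ℕ → ℝ) (b : ℕ → Choice) (t : ℕ) : ℝ :=
  if b t = Choice.L then 1 - cumul vA (a t) else cumul vA (a t)

/-- Bob's round-`t` utility: if he picks `L` he gets `[0,a_t]`, else `[a_t,1]`. -/
noncomputable def uB (vB : ℝ → ℝ) (a : ℕ → ℝ) (b : ℕ → Choice) (t : ℕ) : ℝ :=
  if b t = Choice.L then cumul vB (a t) else 1 - cumul vB (a t)

/-- A pure Alice strategy: given the history `(a_1,…,a_t; b_1,…,b_t)`, produce the
next cut `a_{t+1}`. -/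
def AliceStrategy : Type := ∀ t : ℕ, (Fin t → ℝ) → (Fin t → Choice) → ℝ

/-- A pure (sequential) Bob strategy: given `(a_1,…,a_{t+1}; b_1,…,b_t)`, produce the
next choice `b_{t+1}`. -/
def BobStrategy : Type := ∀ t : ℕ, (Fin (t+1) → ℝ) → (Fin t → Choice) → Choice

/-- The trajectory `(a,b)` is consistent with Alice's strategy `S` over horizon `T`. -/
def AliceConsistent (S : AliceStrategy) (a : ℕ → ℝ) (b : ℕ → Choice) (T : ℕ) : Prop :=
  ∀ t : ℕ, t < T → a (t+1) = S t (fun i => a (i.1+1)) (fun i => b (i.1+1))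

/-- The trajectory `(a,b)` is consistent with Bob's strategy `S` over horizon `T`. -/
def BobConsistent (S : BobStrategy) (a : ℕ → ℝ) (b : ℕ → Choice) (T : ℕ) : Prop :=
  ∀ t : ℕ, t < T → b (t+1) = S t (fun i => a (i.1+1)) (fun i => b (i.1+1))

/-- Alice's Stackelberg value `u_A^* = max(V_A(m_B), 1 - V_A(m_B))`. -/
noncomputable def stackValue (vA : ℝ → ℝ) (mB : ℝ) : ℝ :=
  max (cumul vA mB) (1 - cumul vA mB)

namespace MyopicAux

lemma intInt {v : ℝ → ℝ} (hv : IntervalIntegrable v volume 0 1)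
    {x y : ℝ} (hx : x ∈ Set.Icc (0:ℝ) 1) (hy : y ∈ Set.Icc (0:ℝ) 1) :
    IntervalIntegrable v volume x y := by
  refine hv.mono_set (Set.uIcc_subset_uIcc ?_ ?_) <;>
    rw [Set.uIcc_of_le zero_le_one] <;> assumption

lemma cumul_sub {v : ℝ → ℝ} (hv : IntervalIntegrable v volume 0 1)
    {x y : ℝ} (hx : x ∈ Set.Icc (0:ℝ) 1) (hy : y ∈ Set.Icc (0:ℝ) 1) :
    cumul v y - cumul v x = ∫ t in x..y, v t := by
  have h1 := intervalIntegral.integral_add_adjacent_intervals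
    (intInt hv (Set.left_mem_Icc.2 zero_le_one) hx) (intInt hv hx hy)
  simp only [cumul]
  linarith

lemma cumul_bounds {lo hi : ℝ} {v : ℝ → ℝ} (hv : IsDensity lo hi v)
    {x y : ℝ} (hx : x ∈ Set.Icc (0:ℝ) 1) (hy : y ∈ Set.Icc (0:ℝ) 1) (hxy : x ≤ y) :
    lo * (y - x) ≤ cumul v y - cumul v x ∧ cumul v y - cumul v x ≤ hi * (y - x) := by
  obtain ⟨hint, hb, -⟩ := hv
  rw [cumul_sub hint hx hy]
  have hII := intInt hint hx hy
  have hsub : Set.Icc x y ⊆ Set.Icc (0:ℝ) 1 := Set.Icc_subset_Icc hx.1 hy.2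
  constructor
  · have h := intervalIntegral.integral_mono_on hxy intervalIntegrable_const hII
      (fun z hz => (hb z (hsub hz)).1)
    rw [intervalIntegral.integral_const, smul_eq_mul] at h
    linarith
  · have h := intervalIntegral.integral_mono_on hxy hII intervalIntegrable_const
      (fun z hz => (hb z (hsub hz)).2)
    rw [intervalIntegral.integral_const, smul_eq_mul] at h
    linarith

lemma cumul_zero (v : ℝ → ℝ) : cumul v 0 = 0 := intervalIntegral.integral_same

lemma cumul_one {lo hi : ℝ} {v : ℝ → ℝ} (hv : IsDensity lo hi v) : cumul v 1 = 1 := hv.2.2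

noncomputable def ivl (h : ℕ → Choice) : ℕ → ℝ × ℝ
  | 0 => (0, 1)
  | n+1 =>
    if h n = Choice.L then ((ivl h n).1, ((ivl h n).1 + (ivl h n).2)/2)
    else (((ivl h n).1 + (ivl h n).2)/2, (ivl h n).2)

lemma ivl_spec (h : ℕ → Choice) (n : ℕ) :
    0 ≤ (ivl h n).1 ∧ (ivl h n).1 ≤ (ivl h n).2 ∧ (ivl h n).2 ≤ 1 ∧
      (ivl h n).2 - (ivl h n).1 = (1/2:ℝ)^n := by
  induction n with
  | zero => simp [ivl]
  | succ n ih =>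
    obtain ⟨h1, h2, h3, h4⟩ := ih
    by_cases hc : h n = Choice.L <;>
      simp only [ivl, hc, if_true, if_false, reduceIte] <;>
      refine ⟨by linarith, by linarith, by linarith, ?_⟩ <;>
      rw [pow_succ] <;> linarith

lemma ivl_congr {h h' : ℕ → Choice} {n : ℕ} (he : ∀ i < n, h i = h' i) :
    ivl h n = ivl h' n := by
  induction n with
  | zero => rfl
  | succ n ih =>
    have hn := ih (fun i hi => he i (Nat.lt_succ_of_lt hi))
    simp only [ivl, hn, he n (Nat.lt_succ_self n)]

noncomputable def cutF (vA : ℝ → ℝ) (T K : ℕ) (h : ℕ → Choice) (t : ℕ) : ℝ :=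
  if t < K then ((ivl h t).1 + (ivl h t).2)/2
  else if 1 - cumul vA (ivl h K).2 ≤ cumul vA (ivl h K).1
    then max ((ivl h K).1 - 1/(T:ℝ)) 0
    else min ((ivl h K).2 + 1/(T:ℝ)) 1

lemma cutF_mem (vA : ℝ → ℝ) (T K : ℕ) (h : ℕ → Choice) (t : ℕ) :
    cutF vA T K h t ∈ Set.Icc (0:ℝ) 1 := by
  have hT : (0:ℝ) ≤ 1/(T:ℝ) := by positivity
  unfold cutF
  split
  · obtain ⟨h1, h2, h3, -⟩ := ivl_spec h t
    constructor <;> [linarith; linarith]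
  · obtain ⟨h1, h2, h3, -⟩ := ivl_spec h K
    split
    · exact ⟨le_max_right _ _, max_le (by linarith) zero_le_one⟩
    · exact ⟨le_min (by linarith) zero_le_one, min_le_right _ _⟩

lemma cutF_congr {vA : ℝ → ℝ} {T K : ℕ} {h h' : ℕ → Choice} {t : ℕ}
    (he : ∀ i < t, h i = h' i) :
    cutF vA T K h t = cutF vA T K h' t := by
  unfold cutF
  by_cases hc : t < K
  · rw [if_pos hc, if_pos hc, ivl_congr he]
  · have hK : ivl h K = ivl h' K :=
      ivl_congr (fun i hi => he i (lt_of_lt_of_le hi (le_of_not_gt hc)))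
    rw [if_neg hc, if_neg hc, hK]

end MyopicAux

set_option maxHeartbeats 2000000 in
/-- There is a constant `C > 0` depending only on `Δ` such that for every
horizon `T ≥ 2` Alice has a pure strategy whose Stackelberg regret against any myopic Bob
is at most `C·(1 + log T)`. -/
theorem alice_exploits_myopic_bob (Δ : ℝ) (hΔ : 0 < Δ) :
    ∃ C : ℝ, 0 < C ∧
      ∀ (δ : ℝ) (vA : ℝ → ℝ), 0 < δ → δ ≤ Δ → IsDensity δ Δ vA →
      ∀ T : ℕ, 2 ≤ T →
      ∃ SA : AliceStrategy,
        (∀ t h₁ h₂, SA t h₁ h₂ ∈ Set.Icc (0:ℝ) 1) ∧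
        ∀ (vB : ℝ → ℝ), IsDensity δ Δ vB →
        ∀ mB : ℝ, mB ∈ Set.Icc (0:ℝ) 1 → cumul vB mB = 1/2 →
        ∀ (a : ℕ → ℝ) (b : ℕ → Choice),
          AliceConsistent SA a b T →
          (∀ t : ℕ, 1 ≤ t → t ≤ T →
            (b t = Choice.L → 1 - cumul vB (a t) ≤ cumul vB (a t)) ∧
            (b t = Choice.R → cumul vB (a t) ≤ 1 - cumul vB (a t))) →
          ∑ t ∈ Finset.Icc 1 T, (stackValue vA mB - uA vA a b t) ≤
            C * (1 + Real.log T) := by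
  classical
  refine ⟨2 + 2*Δ, by linarith, ?_⟩
  intro δ vA hδ hδΔ hA T hT
  set K := Nat.clog 2 T with hKdef
  refine ⟨fun t _ hB =>
      MyopicAux.cutF vA T K (fun i => if hi : i < t then hB ⟨i, hi⟩ else Choice.L) t,
    fun t _ hB => MyopicAux.cutF_mem vA T K _ t, ?_⟩
  intro vB hBd mB hmB hmBv a b hcons hmyo
  -- numeric facts
  have hT2 : (2:ℝ) ≤ (T:ℝ) := by exact_mod_cast hT
  have hT0 : (0:ℝ) < (T:ℝ) := by linarith
  have hTinv : (0:ℝ) < 1/(T:ℝ) := by positivity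
  have hw : (1/2:ℝ)^K ≤ 1/(T:ℝ) := by
    have h1 : T ≤ 2 ^ K := Nat.le_pow_clog (by norm_num) T
    have h2 : (T:ℝ) ≤ (2:ℝ) ^ K := by exact_mod_cast h1
    rw [div_pow, one_pow]
    exact one_div_le_one_div_of_le hT0 h2
  set h : ℕ → Choice := fun i => b (i+1) with hh
  have hhn : ∀ n, h n = b (n+1) := fun n => rfl
  have hcut : ∀ t, t < T → a (t+1) = MyopicAux.cutF vA T K h t := by
    intro t ht
    rw [hcons t ht]
    exact MyopicAux.cutF_congr (fun i hi => by simp [hi, hhn])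
  -- cumul facts
  have hVA : ∀ {x y : ℝ}, x ∈ Set.Icc (0:ℝ) 1 → y ∈ Set.Icc (0:ℝ) 1 → x ≤ y →
      0 ≤ cumul vA y - cumul vA x ∧ cumul vA y - cumul vA x ≤ Δ * (y - x) := by
    intro x y hx hy hxy
    obtain ⟨hlo, hhi⟩ := MyopicAux.cumul_bounds hA hx hy hxy
    exact ⟨le_trans (mul_nonneg hδ.le (by linarith)) hlo, hhi⟩
  have hVB : ∀ {x y : ℝ}, x ∈ Set.Icc (0:ℝ) 1 → y ∈ Set.Icc (0:ℝ) 1 → x < y →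
      cumul vB x < cumul vB y := by
    intro x y hx hy hxy
    obtain ⟨hlo, -⟩ := MyopicAux.cumul_bounds hBd hx hy hxy.le
    nlinarith
  have hVA01 : ∀ {x : ℝ}, x ∈ Set.Icc (0:ℝ) 1 → 0 ≤ cumul vA x ∧ cumul vA x ≤ 1 := by
    intro x hx
    have h1 := (hVA (Set.left_mem_Icc.2 zero_le_one) hx hx.1).1
    have h2 := (hVA hx (Set.right_mem_Icc.2 zero_le_one) hx.2).1
    rw [MyopicAux.cumul_zero] at h1
    rw [MyopicAux.cumul_one hA] at h2
    constructor <;> linarith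
  -- the invariant
  have hinv : ∀ n, n ≤ K → n ≤ T →
      (MyopicAux.ivl h n).1 ≤ mB ∧ mB ≤ (MyopicAux.ivl h n).2 := by
    intro n
    induction n with
    | zero => intro _ _; exact ⟨hmB.1, hmB.2⟩
    | succ n ih =>
      intro h1 h2
      obtain ⟨hl, hr⟩ := ih (le_of_lt h1) (le_of_lt h2)
      obtain ⟨hs0, hs1, hs2, -⟩ := MyopicAux.ivl_spec h n
      have hnK : n < K := h1
      have hnT : n < T := h2
      have ha : a (n+1) = ((MyopicAux.ivl h n).1 + (MyopicAux.ivl h n).2)/2 := by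
        rw [hcut n hnT]
        unfold MyopicAux.cutF
        rw [if_pos hnK]
      set m := ((MyopicAux.ivl h n).1 + (MyopicAux.ivl h n).2)/2 with hm
      have hmIcc : m ∈ Set.Icc (0:ℝ) 1 := ⟨by rw [hm]; linarith, by rw [hm]; linarith⟩
      have hmy := hmyo (n+1) (Nat.le_add_left 1 n) h2
      cases hbn : b (n+1) with
      | L =>
        have hge : 1 - cumul vB (a (n+1)) ≤ cumul vB (a (n+1)) := hmy.1 hbn
        rw [ha] at hge
        have hmBm : mB ≤ m := by
          by_contra hcon
          push_neg at hcon
          have := hVB hmIcc hmB hcon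
          linarith [hmBv ▸ this]
        simp only [MyopicAux.ivl, hhn n, hbn, if_true, reduceIte]
        exact ⟨hl, hmBm⟩
      | R =>
        have hge : cumul vB (a (n+1)) ≤ 1 - cumul vB (a (n+1)) := hmy.2 hbn
        rw [ha] at hge
        have hmBm : m ≤ mB := by
          by_contra hcon
          push_neg at hcon
          have := hVB hmB hmIcc hcon
          linarith [hmBv ▸ this]
        have : h n = Choice.R := by rw [hhn n, hbn]
        simp only [MyopicAux.ivl, this, reduceCtorEq, if_false, reduceIte]
        exact ⟨hmBm, hr⟩
  -- per-round bound
  have hround : ∀ t, 1 ≤ t → t ≤ T →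
      stackValue vA mB - uA vA a b t ≤ (if t ≤ K then (1:ℝ) else 0) + 2*Δ/(T:ℝ) := by
    intro t ht1 htT
    obtain ⟨n, rfl⟩ : ∃ n, t = n + 1 := ⟨t - 1, (Nat.succ_pred_eq_of_pos ht1).symm⟩
    have hnT : n < T := htT
    have hat : a (n+1) = MyopicAux.cutF vA T K h n := hcut n hnT
    have hVAm := hVA01 hmB
    have hΔT : (0:ℝ) ≤ 2*Δ/(T:ℝ) := by positivity
    by_cases hnK : n < K
    · -- exploration round: regret ≤ 1
      have htK : n + 1 ≤ K := hnK
      rw [if_pos htK]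
      have haIcc : a (n+1) ∈ Set.Icc (0:ℝ) 1 := by
        rw [hat]; exact MyopicAux.cutF_mem vA T K h n
      have h01 := hVA01 haIcc
      have hsv : stackValue vA mB ≤ 1 := max_le (by linarith [hVAm.2]) (by linarith [hVAm.1])
      have huA : 0 ≤ uA vA a b (n+1) := by
        unfold uA; split <;> linarith [h01.1, h01.2]
      linarith
    · -- exploitation round
      push_neg at hnK
      have htK : ¬ (n + 1 ≤ K) := by omega
      rw [if_neg htK]
      obtain ⟨hl, hr⟩ := hinv K le_rfl (le_of_lt (lt_of_le_of_lt hnK hnT))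
      obtain ⟨hs0, hs1, hs2, hsw⟩ := MyopicAux.ivl_spec h K
      set l := (MyopicAux.ivl h K).1 with hldef
      set r := (MyopicAux.ivl h K).2 with hrdef
      have hlI : l ∈ Set.Icc (0:ℝ) 1 := ⟨hs0, le_trans hs1 hs2⟩
      have hrI : r ∈ Set.Icc (0:ℝ) 1 := ⟨le_trans hs0 hs1, hs2⟩
      have hrl : r - l ≤ 1/(T:ℝ) := by rw [hsw]; exact hw
      unfold MyopicAux.cutF at hat
      rw [if_neg (by omega)] at hat
      by_cases hc : 1 - cumul vA r ≤ cumul vA l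
      · -- target left: cut x = max (l - 1/T) 0, Bob must pick R
        rw [if_pos hc] at hat
        set x := max (l - 1/(T:ℝ)) 0 with hxdef
        have hx0 : 0 ≤ x := le_max_right _ _
        have hxl : x ≤ l := max_le (by linarith) hs0
        have hlx : l - x ≤ 1/(T:ℝ) := by
          have := le_max_left (l - 1/(T:ℝ)) 0
          linarith
        have hxI : x ∈ Set.Icc (0:ℝ) 1 := ⟨hx0, le_trans hxl hlI.2⟩
        have hxmB : x < mB := by
          by_cases hl0 : l = 0
          · have hx00 : x = 0 := by
              rw [hxdef, hl0]
              exact max_eq_right (by linarith)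
            rcases eq_or_lt_of_le hmB.1 with heq | hlt
            · exfalso
              rw [← heq, MyopicAux.cumul_zero] at hmBv
              norm_num at hmBv
            · rw [hx00]; exact hlt
          · have : x < l := max_lt (by linarith) (lt_of_le_of_ne hs0 (Ne.symm hl0))
            linarith
        have hVBx : cumul vB x < 1/2 := by
          have := hVB hxI hmB hxmB
          rw [hmBv] at this
          linarith
        have hbR : b (n+1) = Choice.R := by
          cases hbn : b (n+1) with
          | L =>
            exfalso
            have := (hmyo (n+1) (Nat.le_add_left 1 n) htT).1 hbn
            rw [hat] at this
            linarith
          | R => rfl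
        have huA : uA vA a b (n+1) = cumul vA x := by
          simp [uA, hbR, hat]
        have h1 := hVA hxI hmB hxmB.le
        have h2 := hVA hlI hrI hs1
        have h3 := hVA hxI hlI hxl
        have h4 := hVA hlI hmB hl
        have hmr : mB ≤ r := hr
        have e2 : Δ * (r - l) ≤ Δ * (1/(T:ℝ)) := mul_le_mul_of_nonneg_left hrl hΔ.le
        have e3 : Δ * (l - x) ≤ Δ * (1/(T:ℝ)) := mul_le_mul_of_nonneg_left hlx hΔ.le
        have e1 : Δ * (mB - x) ≤ Δ * (1/(T:ℝ)) + Δ * (1/(T:ℝ)) := by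
          have : Δ * (mB - x) ≤ Δ * ((r - l) + (l - x)) :=
            mul_le_mul_of_nonneg_left (by linarith) hΔ.le
          nlinarith
        have eT : Δ * (1/(T:ℝ)) + Δ * (1/(T:ℝ)) = 2*Δ/(T:ℝ) := by ring
        rw [huA]
        unfold stackValue
        rw [sub_le_iff_le_add]
        apply max_le
        · linarith
        · linarith
      · -- target right: cut x = min (r + 1/T) 1, Bob must pick L
        rw [if_neg hc] at hat
        push_neg at hc
        set x := min (r + 1/(T:ℝ)) 1 with hxdef
        have hx1 : x ≤ 1 := min_le_right _ _
        have hrx : r ≤ x := le_min (by linarith) hs2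
        have hxr : x - r ≤ 1/(T:ℝ) := by
          have := min_le_left (r + 1/(T:ℝ)) 1
          linarith
        have hxI : x ∈ Set.Icc (0:ℝ) 1 := ⟨le_trans hrI.1 hrx, hx1⟩
        have hmBx : mB < x := by
          by_cases hr1 : r = 1
          · have hx11 : x = 1 := by
              rw [hxdef, hr1]
              exact min_eq_right (by linarith)
            rcases eq_or_lt_of_le hmB.2 with heq | hlt
            · exfalso
              rw [heq, MyopicAux.cumul_one hBd] at hmBv
              norm_num at hmBv
            · rw [hx11]; exact hlt
          · have : r < x := lt_min (by linarith) (lt_of_le_of_ne hs2 hr1)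
            linarith
        have hVBx : 1/2 < cumul vB x := by
          have := hVB hmB hxI hmBx
          rw [hmBv] at this
          linarith
        have hbL : b (n+1) = Choice.L := by
          cases hbn : b (n+1) with
          | L => rfl
          | R =>
            exfalso
            have := (hmyo (n+1) (Nat.le_add_left 1 n) htT).2 hbn
            rw [hat] at this
            linarith
        have huA : uA vA a b (n+1) = 1 - cumul vA x := by
          simp [uA, hbL, hat]
        have h1 := hVA hmB hxI hmBx.le
        have h2 := hVA hlI hrI hs1
        have h3 := hVA hrI hxI hrx
        have h4 := hVA hmB hrI hr
        have hml : l ≤ mB := hl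
        have e2 : Δ * (r - l) ≤ Δ * (1/(T:ℝ)) := mul_le_mul_of_nonneg_left hrl hΔ.le
        have e3 : Δ * (x - r) ≤ Δ * (1/(T:ℝ)) := mul_le_mul_of_nonneg_left hxr hΔ.le
        have e1 : Δ * (x - mB) ≤ Δ * (1/(T:ℝ)) + Δ * (1/(T:ℝ)) := by
          have : Δ * (x - mB) ≤ Δ * ((x - r) + (r - l)) :=
            mul_le_mul_of_nonneg_left (by linarith) hΔ.le
          nlinarith
        have eT : Δ * (1/(T:ℝ)) + Δ * (1/(T:ℝ)) = 2*Δ/(T:ℝ) := by ring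
        rw [huA]
        unfold stackValue
        rw [sub_le_iff_le_add]
        apply max_le
        · linarith
        · linarith
  -- summation
  have hsumle : ∑ t ∈ Finset.Icc 1 T, (stackValue vA mB - uA vA a b t) ≤
      ∑ t ∈ Finset.Icc 1 T, ((if t ≤ K then (1:ℝ) else 0) + 2*Δ/(T:ℝ)) := by
    apply Finset.sum_le_sum
    intro t ht
    rw [Finset.mem_Icc] at ht
    exact hround t ht.1 ht.2
  have hsum1 : ∑ t ∈ Finset.Icc 1 T, (if t ≤ K then (1:ℝ) else 0) ≤ (K:ℝ) := by
    rw [Finset.sum_boole]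
    have hsub : (Finset.Icc 1 T).filter (fun t => t ≤ K) ⊆ Finset.Icc 1 K := by
      intro t htf
      simp only [Finset.mem_filter, Finset.mem_Icc] at htf ⊢
      omega
    have hcard : ((Finset.Icc 1 T).filter (fun t => t ≤ K)).card ≤ K := by
      have := Finset.card_le_card hsub
      rwa [Nat.card_Icc, Nat.add_sub_cancel] at this
    exact_mod_cast hcard
  have hsum2 : ∑ _t ∈ Finset.Icc 1 T, (2*Δ/(T:ℝ)) = 2*Δ := by
    rw [Finset.sum_const, Nat.card_Icc, Nat.add_sub_cancel, nsmul_eq_mul]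
    field_simp
  have hsplit : ∑ t ∈ Finset.Icc 1 T, ((if t ≤ K then (1:ℝ) else 0) + 2*Δ/(T:ℝ)) =
      (∑ t ∈ Finset.Icc 1 T, (if t ≤ K then (1:ℝ) else 0)) +
      (∑ _t ∈ Finset.Icc 1 T, (2*Δ/(T:ℝ))) := Finset.sum_add_distrib
  -- bound on K
  have hK1 : 1 ≤ K := Nat.clog_pos (by norm_num) hT
  have hK1' : (1:ℝ) ≤ (K:ℝ) := by exact_mod_cast hK1
  have hKlt : ((2:ℕ) ^ (K - 1) : ℕ) < T := Nat.pow_pred_clog_lt_self (by norm_num) hT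
  have h2r : ((2:ℝ)) ^ (K - 1) < (T:ℝ) := by exact_mod_cast hKlt
  have hloglt : ((K - 1 : ℕ):ℝ) * Real.log 2 < Real.log T := by
    have := Real.log_lt_log (by positivity) h2r
    rwa [Real.log_pow] at this
  have hcast : ((K - 1 : ℕ):ℝ) = (K:ℝ) - 1 := by
    rw [Nat.cast_sub hK1, Nat.cast_one]
  rw [hcast] at hloglt
  have hl2 : (0.6931471803:ℝ) < Real.log 2 := Real.log_two_gt_d9
  have hlogT0 : (0:ℝ) ≤ Real.log T := Real.log_nonneg (by linarith)
  have hKb : (K:ℝ) ≤ 1 + 2 * Real.log T := by nlinarith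
  calc ∑ t ∈ Finset.Icc 1 T, (stackValue vA mB - uA vA a b t) ≤
      (∑ t ∈ Finset.Icc 1 T, (if t ≤ K then (1:ℝ) else 0)) +
      (∑ _t ∈ Finset.Icc 1 T, (2*Δ/(T:ℝ))) := by rw [← hsplit]; exact hsumle
    _ ≤ (K:ℝ) + 2*Δ := by rw [hsum2]; linarith
    _ ≤ (2 + 2*Δ) * (1 + Real.log T) := by nlinarith
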